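/- Under the relative-degree-one Lyapunov-design setup, the function V(t) = e(t)ᵀ P e(t) + tr[(Θ(t) − Θ*) M_s⁻¹ (Θ(t) − Θ*)ᵀ], with M_s = K_p⁻¹ S, is differentiable and satisfies dV/dt (t) = −e(t)ᵀ Q e(t) ≤ 0 for every t. -/

import Mathlib

open Matrix BigOperators

private lemma trace_vecMulVec_mul' {m n : Type*} [Fintype m] [Fintype n]
    (u : m → ℝ) (v : n → ℝ) (C : Matrix n m ℝ) :
    Matrix.trace (Matrix.vecMulVec u v * C) = u ⬝ᵥ (v ᵥ* C) := by
  simp [Matrix.trace, Matrix.diag, Matrix.mul_apply, Matrix.vecMulVec_apply, Matrix.vecMul,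
    dotProduct, Finset.mul_sum, mul_assoc]

private lemma dot_transpose_mulVec {M : ℕ} (A : Matrix (Fin M) (Fin M) ℝ) (v : Fin M → ℝ) :
    v ⬝ᵥ (Aᵀ *ᵥ v) = v ⬝ᵥ (A *ᵥ v) := by
  rw [Matrix.mulVec_transpose, dotProduct_comm, ← Matrix.dotProduct_mulVec]

/-- Relative-degree-one Lyapunov design: the function
`V = eᵀ P e + tr[(Θ − Θ*) M_s⁻¹ (Θ − Θ*)ᵀ]` with `M_s = K_p⁻¹ S` is
differentiable and satisfies `dV/dt = −eᵀ Q e ≤ 0`. -/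
theorem relative_degree_one_lyapunov_derivative
    (N M : ℕ) (hN : 0 < N) (hM : 0 < M)
    (A0 : Matrix (Fin M) (Fin M) ℝ)
    (P Q : Matrix (Fin M) (Fin M) ℝ) (hP : P.PosDef) (hQ : Q.PosDef)
    (hPA : P * A0 + A0ᵀ * P = -Q)
    (Kp S : Matrix (Fin M) (Fin M) ℝ) (hKp : IsUnit Kp.det)
    (hMs : (Kp⁻¹ * S).PosDef)
    (Θs : Matrix (Fin N) (Fin M) ℝ)
    (ω : ℝ → Fin N → ℝ) (hωc : ∀ i, Continuous fun t => ω t i)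
    (e e' : ℝ → Fin M → ℝ)
    (Θ Θ' : ℝ → Matrix (Fin N) (Fin M) ℝ)
    (hed : ∀ t j, HasDerivAt (fun s => e s j) (e' t j) t)
    (hΘd : ∀ t i j, HasDerivAt (fun s => Θ s i j) (Θ' t i j) t)
    (helaw : ∀ t, e' t = A0.mulVec (e t) + Kp.mulVec ((Θ t - Θs)ᵀ.mulVec (ω t)))
    (hΘlaw : ∀ t, (Θ' t)ᵀ = -Matrix.vecMulVec (Sᵀ.mulVec (P.mulVec (e t))) (ω t))
    (V : ℝ → ℝ)
    (hV : ∀ t, V t = (∑ j, e t j * (P.mulVec (e t)) j)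
        + Matrix.trace ((Θ t - Θs) * (Kp⁻¹ * S)⁻¹ * (Θ t - Θs)ᵀ)) :
    ∀ t, HasDerivAt V (-(∑ j, e t j * (Q.mulVec (e t)) j)) t ∧
      -(∑ j, e t j * (Q.mulVec (e t)) j) ≤ 0 := by
  intro t
  set B : Matrix (Fin M) (Fin M) ℝ := (Kp⁻¹ * S)⁻¹ with hB
  have hPsym : Pᵀ = P := by simpa [Matrix.IsSymm] using hP.1
  have hPv : ∀ v, v ᵥ* P = P *ᵥ v := fun v => by
    nth_rewrite 1 [← hPsym]; rw [Matrix.vecMul_transpose]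
  have hSdet : IsUnit S.det := by
    have h1 : (Kp⁻¹ * S).det ≠ 0 := hMs.det_pos.ne'
    have h2 : Kp⁻¹.det * S.det ≠ 0 := by rwa [Matrix.det_mul] at h1
    exact isUnit_iff_ne_zero.mpr (right_ne_zero_of_mul h2)
  have hSB : S * B = Kp := by
    rw [hB, Matrix.mul_inv_rev, Matrix.nonsing_inv_nonsing_inv _ hKp, ← Matrix.mul_assoc,
      Matrix.mul_nonsing_inv _ hSdet, Matrix.one_mul]
  have hMsym : (Kp⁻¹ * S)ᵀ = Kp⁻¹ * S := by
    rw [← Matrix.conjTranspose_eq_transpose_of_trivial]; exact hMs.1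
  have hBsym : Bᵀ = B := by
    rw [hB, Matrix.transpose_nonsing_inv, hMsym]
  -- rewrite V as an explicit finite sum
  have hVeq : V = fun s => (∑ j, ∑ k, e s j * (P j k * e s k))
      + ∑ i, ∑ k, (∑ j, (Θ s i j - Θs i j) * B j k) * (Θ s i k - Θs i k) := by
    have h1 : ∀ s, (∑ j, e s j * (P.mulVec (e s)) j) = ∑ j, ∑ k, e s j * (P j k * e s k) :=
      fun s => by simp [Matrix.mulVec, dotProduct, Finset.mul_sum]
    have h2 : ∀ s, Matrix.trace ((Θ s - Θs) * B * (Θ s - Θs)ᵀ)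
        = ∑ i, ∑ k, (∑ j, (Θ s i j - Θs i j) * B j k) * (Θ s i k - Θs i k) :=
      fun s => by simp [Matrix.trace, Matrix.diag, Matrix.mul_apply]
    funext s
    rw [hV s, h1 s, h2 s]
  -- the derivative in explicit sum form
  set D : ℝ := (∑ j, ∑ k, (e' t j * (P j k * e t k) + e t j * (P j k * e' t k)))
      + ∑ i, ∑ k, ((∑ j, Θ' t i j * B j k) * (Θ t i k - Θs i k)
          + (∑ j, (Θ t i j - Θs i j) * B j k) * Θ' t i k) with hD
  have hder : HasDerivAt V D t := by
    rw [hVeq, hD]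
    refine HasDerivAt.add ?_ ?_
    · refine HasDerivAt.fun_sum fun j _ => HasDerivAt.fun_sum fun k _ => ?_
      exact (hed t j).mul ((hed t k).const_mul (P j k))
    · refine HasDerivAt.fun_sum fun i _ => HasDerivAt.fun_sum fun k _ => ?_
      exact (HasDerivAt.fun_sum fun j _ => ((hΘd t i j).sub_const _).mul_const (B j k)).mul
        ((hΘd t i k).sub_const _)
  -- rewrite D in matrix form
  have hdp1 : e' t ⬝ᵥ (P *ᵥ e t) = ∑ j, ∑ k, e' t j * (P j k * e t k) := by
    simp [dotProduct, Matrix.mulVec, Finset.mul_sum]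
  have hdp2 : e t ⬝ᵥ (P *ᵥ e' t) = ∑ j, ∑ k, e t j * (P j k * e' t k) := by
    simp [dotProduct, Matrix.mulVec, Finset.mul_sum]
  have htrA : Matrix.trace (Θ' t * B * (Θ t - Θs)ᵀ)
      = ∑ i, ∑ k, (∑ j, Θ' t i j * B j k) * (Θ t i k - Θs i k) := by
    simp [Matrix.trace, Matrix.diag, Matrix.mul_apply]
  have htrB : Matrix.trace ((Θ t - Θs) * B * (Θ' t)ᵀ)
      = ∑ i, ∑ k, (∑ j, (Θ t i j - Θs i j) * B j k) * Θ' t i k := by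
    simp [Matrix.trace, Matrix.diag, Matrix.mul_apply]
  have hDm : D = (e' t ⬝ᵥ (P *ᵥ e t) + e t ⬝ᵥ (P *ᵥ e' t))
      + (Matrix.trace (Θ' t * B * (Θ t - Θs)ᵀ)
          + Matrix.trace ((Θ t - Θs) * B * (Θ' t)ᵀ)) := by
    rw [hD, hdp1, hdp2, htrA, htrB]
    simp only [← Finset.sum_add_distrib]
  -- the second trace equals the first
  have hΘ' : Θ' t = -(Matrix.vecMulVec (ω t) (Sᵀ *ᵥ (P *ᵥ e t))) := by
    have h := congrArg Matrix.transpose (hΘlaw t)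
    rw [Matrix.transpose_transpose] at h
    rw [h]
    ext i j
    simp [Matrix.vecMulVec_apply, mul_comm]
  have htr2 : Matrix.trace ((Θ t - Θs) * B * (Θ' t)ᵀ)
      = Matrix.trace (Θ' t * B * (Θ t - Θs)ᵀ) := by
    rw [← Matrix.trace_transpose ((Θ t - Θs) * B * (Θ' t)ᵀ), Matrix.transpose_mul,
      Matrix.transpose_mul, Matrix.transpose_transpose, hBsym, Matrix.mul_assoc]
  -- value of the first trace
  have hX : ω t ⬝ᵥ ((Sᵀ *ᵥ (P *ᵥ e t)) ᵥ* (B * (Θ t - Θs)ᵀ))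
      = e t ⬝ᵥ ((P * Kp * (Θ t - Θs)ᵀ) *ᵥ ω t) := by
    rw [Matrix.mulVec_transpose, ← hPv, Matrix.vecMul_vecMul, Matrix.vecMul_vecMul]
    rw [show P * (S * (B * (Θ t - Θs)ᵀ)) = P * Kp * (Θ t - Θs)ᵀ by
      rw [← Matrix.mul_assoc, ← Matrix.mul_assoc, Matrix.mul_assoc P S B, hSB]]
    rw [Matrix.dotProduct_mulVec, dotProduct_comm]
  have htr1 : Matrix.trace (Θ' t * B * (Θ t - Θs)ᵀ)
      = -(e t ⬝ᵥ ((P * Kp * (Θ t - Θs)ᵀ) *ᵥ ω t)) := by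
    rw [hΘ', Matrix.neg_mul, Matrix.neg_mul, Matrix.trace_neg, Matrix.mul_assoc,
      trace_vecMulVec_mul', hX]
  -- value of the e-terms
  have he1 : e' t ⬝ᵥ (P *ᵥ e t) = e t ⬝ᵥ (P *ᵥ e' t) := by
    rw [Matrix.dotProduct_mulVec, dotProduct_comm, hPv]
  have he2 : e t ⬝ᵥ (P *ᵥ e' t) = e t ⬝ᵥ ((P * A0) *ᵥ e t)
      + e t ⬝ᵥ ((P * Kp * (Θ t - Θs)ᵀ) *ᵥ ω t) := by
    rw [helaw t, Matrix.mulVec_add, dotProduct_add, Matrix.mulVec_mulVec,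
      Matrix.mulVec_mulVec, Matrix.mulVec_mulVec, Matrix.mul_assoc]
  have hfinal : D = -(∑ j, e t j * (Q.mulVec (e t)) j) := by
    have hsum : (∑ j, e t j * (Q.mulVec (e t)) j) = e t ⬝ᵥ (Q *ᵥ e t) := rfl
    rw [hDm, htr2, htr1, he1, he2, hsum]
    have hA0 : e t ⬝ᵥ ((A0ᵀ * P) *ᵥ e t) = e t ⬝ᵥ ((P * A0) *ᵥ e t) := by
      have h : (A0ᵀ * P) = (P * A0)ᵀ := by rw [Matrix.transpose_mul, hPsym]
      rw [h, dot_transpose_mulVec]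
    have hQ' : e t ⬝ᵥ ((P * A0) *ᵥ e t) + e t ⬝ᵥ ((A0ᵀ * P) *ᵥ e t)
        = -(e t ⬝ᵥ (Q *ᵥ e t)) := by
      rw [← dotProduct_add, ← Matrix.add_mulVec, hPA, Matrix.neg_mulVec, dotProduct_neg]
    rw [hA0] at hQ'
    linarith [hQ']
  refine ⟨hfinal ▸ hder, ?_⟩
  have hnn : 0 ≤ ∑ j, e t j * (Q.mulVec (e t)) j := by
    have h := hQ.posSemidef.dotProduct_mulVec_nonneg (e t)
    simpa [dotProduct] using h
  linarith
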